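/- Let N, m, p be natural numbers and let f_e : ℝ^N × ℝ^m → ℝ^N, g_e : ℝ^N → ℝ^p, h_e : ℝ^N × ℝ^m → ℝ be polynomial maps (every coordinate is the evaluation of a real multivariate polynomial) with f_e(0,0) = 0 and g_e(0) = 0. Let x_e : [0,∞) → ℝ^N be differentiable with continuous derivative and w : [0,∞) → ℝ^m be continuous, satisfying x_e'(t) = f_e(x_e(t), w(t)) for all t ≥ 0; set z(t) = h_e(x_e(t), w(t)) and v(t) = g_e(x_e(t)). Assume: (i) ∫₀^T z(t) dt ≥ 0 for every T ≥ 0; (ii) there exists γ ≥ 0 such that whenever sup_{t≥0} ‖v(t)‖ is finite, one has ‖w(t)‖ ≤ γ · sup_{s≥0} ‖v(s)‖ for all t ≥ 0; (iii) there exist a continuously differentiable V : ℝ^N → ℝ with V(0) = 0 and V(y) > 0 for all y ≠ 0, a constant c > 0 such that the sublevel set {y ∈ ℝ^N : V(y) ≤ c} is compact, a scalar s ≥ 0 and ε > 0 such that ⟨∇V(y), f_e(y,u)⟩ + s·h_e(y,u) ≤ −ε·‖y‖² for every u ∈ ℝ^m and every y ∈ ℝ^N with V(y) ≤ c. Then V(x_e(0))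 ≤ c implies that x_e(t) → 0 as t → ∞. -/

import Mathlib

open RealInnerProductSpace
open Filter Topology Set intervalIntegral

set_option maxHeartbeats 2000000

lemma slope_neg_right {f : ℝ → ℝ} {a d : ℝ} (hf : HasDerivWithinAt f d (Set.Ici a) a)
    (hd : d < 0) : ∃ b > a, ∀ t ∈ Set.Ioc a b, f t < f a := by
  have h1 : Tendsto (slope f a) (𝓝[Set.Ici a \ {a}] a) (𝓝 d) :=
    hasDerivWithinAt_iff_tendsto_slope.mp hf
  have hset : Set.Ici a \ {a} = Set.Ioi a := by
    ext t; simp [Set.mem_diff, lt_iff_le_and_ne, eq_comm, and_comm]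
  rw [hset] at h1
  have h2 : ∀ᶠ t in 𝓝[>] a, slope f a t < 0 := h1.eventually_lt_const hd
  rw [eventually_iff, mem_nhdsGT_iff_exists_Ioc_subset] at h2
  obtain ⟨b, hb, hsub⟩ := h2
  refine ⟨b, hb, fun t ht => ?_⟩
  have hs := hsub ht
  have hta : 0 < t - a := sub_pos.mpr ht.1
  have h3 : (f t - f a) / (t - a) < 0 := by simpa [slope_def_field] using hs
  have h4 : f t - f a < 0 := by
    by_contra h
    exact absurd (div_nonneg (not_lt.mp h) hta.le) (not_le.mpr h3)
  linarith


/-- Per-trajectory content of the paper's Theorem 1 (region of attraction): a trajectory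
of the extended polynomial system `ẋₑ = fₑ(xₑ, w)`, with output `z = hₑ(xₑ, w)` satisfying
the integral polynomial constraint `∫₀ᵀ z ≥ 0`, whose input `w` obeys a finite induced
`L∞` gain bound relative to `v = gₑ(xₑ)`, and for which a Lyapunov-type dissipation
inequality holds on a compact sublevel set `{V ≤ c}`, converges to the origin from any
initial condition with `V(xₑ(0)) ≤ c`. -/
theorem stmt_0 {N m p : ℕ}
    (f_e : EuclideanSpace ℝ (Fin N) → EuclideanSpace ℝ (Fin m) → EuclideanSpace ℝ (Fin N))
    (g_e : EuclideanSpace ℝ (Fin N) → EuclideanSpace ℝ (Fin p))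
    (h_e : EuclideanSpace ℝ (Fin N) → EuclideanSpace ℝ (Fin m) → ℝ)
    -- `f_e`, `g_e`, `h_e` are polynomial maps:
    (hf_poly : ∃ P : Fin N → MvPolynomial (Fin N ⊕ Fin m) ℝ,
      ∀ y u i, f_e y u i = MvPolynomial.eval (Sum.elim (fun j => y j) (fun j => u j)) (P i))
    (hg_poly : ∃ Q : Fin p → MvPolynomial (Fin N) ℝ,
      ∀ y i, g_e y i = MvPolynomial.eval (fun j => y j) (Q i))
    (hh_poly : ∃ R : MvPolynomial (Fin N ⊕ Fin m) ℝ,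
      ∀ y u, h_e y u = MvPolynomial.eval (Sum.elim (fun j => y j) (fun j => u j)) R)
    (hf0 : f_e 0 0 = 0) (hg0 : g_e 0 = 0)
    -- the trajectory: `x_e` is C¹ with `ẋₑ(t) = fₑ(xₑ(t), w(t))` for `t ≥ 0`, `w` continuous:
    (x_e : ℝ → EuclideanSpace ℝ (Fin N)) (w : ℝ → EuclideanSpace ℝ (Fin m))
    (hw_cont : ContinuousOn w (Set.Ici (0 : ℝ)))
    (hode : ∀ t : ℝ, 0 ≤ t → HasDerivAt x_e (f_e (x_e t) (w t)) t)
    (hx'_cont : ContinuousOn (fun t => f_e (x_e t) (w t)) (Set.Ici (0 : ℝ)))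
    -- (i) the integral polynomial constraint, with `z(t) = hₑ(xₑ(t), w(t))`:
    (hipc : ∀ T : ℝ, 0 ≤ T → 0 ≤ ∫ t in (0 : ℝ)..T, h_e (x_e t) (w t))
    -- (ii) finite induced L∞ gain, with `v(t) = gₑ(xₑ(t))`:
    (γ : ℝ) (hγ : 0 ≤ γ)
    (hgain : BddAbove (Set.range fun t : Set.Ici (0 : ℝ) => ‖g_e (x_e t)‖) →
      ∀ t : ℝ, 0 ≤ t → ‖w t‖ ≤ γ * ⨆ τ : Set.Ici (0 : ℝ), ‖g_e (x_e τ)‖)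
    -- (iii) the Lyapunov-type dissipation inequality on the compact sublevel set `{V ≤ c}`:
    (V : EuclideanSpace ℝ (Fin N) → ℝ) (hV : ContDiff ℝ 1 V)
    (hV0 : V 0 = 0) (hVpos : ∀ y, y ≠ 0 → 0 < V y)
    (c : ℝ) (hc : 0 < c) (hcompact : IsCompact {y | V y ≤ c})
    (s : ℝ) (hs : 0 ≤ s) (ε : ℝ) (hε : 0 < ε)
    (hdiss : ∀ (u : EuclideanSpace ℝ (Fin m)) (y : EuclideanSpace ℝ (Fin N)), V y ≤ c →
      ⟪gradient V y, f_e y u⟫ + s * h_e y u ≤ -ε * ‖y‖ ^ 2)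
    (h0 : V (x_e 0) ≤ c) :
    Filter.Tendsto x_e Filter.atTop (nhds 0) := by
  obtain ⟨R, hR⟩ := hh_poly
  -- continuity of the trajectory and data
  have cxAt : ∀ t : ℝ, 0 ≤ t → ContinuousAt x_e t := fun t ht => (hode t ht).continuousAt
  have cxOn : ContinuousOn x_e (Set.Ici 0) := fun t ht => (cxAt t ht).continuousWithinAt
  have cpair : ContinuousOn
      (fun t => (Sum.elim (fun j => x_e t j) (fun j => w t j) : Fin N ⊕ Fin m → ℝ))
      (Set.Ici 0) := by
    rw [continuousOn_pi]
    rintro (j | j)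
    · exact (EuclideanSpace.proj j).continuous.comp_continuousOn cxOn
    · exact (EuclideanSpace.proj j).continuous.comp_continuousOn hw_cont
  have cz : ContinuousOn (fun t => h_e (x_e t) (w t)) (Set.Ici 0) := by
    have h := (MvPolynomial.continuous_eval R).comp_continuousOn cpair
    simpa [hR, Function.comp_def] using h
  have cnx : ContinuousOn (fun t => ‖x_e t‖ ^ 2) (Set.Ici 0) := cxOn.norm.pow 2
  set z : ℝ → ℝ := fun t => h_e (x_e t) (w t) with hzdef
  set nx : ℝ → ℝ := fun t => ‖x_e t‖ ^ 2 with hnxdef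
  -- integrability and FTC
  have intOn : ∀ u : ℝ → ℝ, ContinuousOn u (Set.Ici 0) → ∀ a b : ℝ, 0 ≤ a → 0 ≤ b →
      IntervalIntegrable u MeasureTheory.volume a b := by
    intro u cu a b ha hb
    exact (cu.mono fun t ht => (le_min ha hb).trans ht.1).intervalIntegrable
  have FTCat : ∀ u : ℝ → ℝ, ContinuousOn u (Set.Ici 0) → ∀ t : ℝ, 0 < t →
      HasDerivAt (fun T => ∫ τ in (0:ℝ)..T, u τ) (u t) t := by
    intro u cu t ht
    exact intervalIntegral.integral_hasDerivAt_right (intOn u cu 0 t le_rfl ht.le)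
      ((cu.mono Set.Ioi_subset_Ici_self).stronglyMeasurableAtFilter isOpen_Ioi t ht)
      ((cu t (Set.mem_Ici.mpr ht.le)).continuousAt (Ici_mem_nhds ht))
  have FTCw : ∀ u : ℝ → ℝ, ContinuousOn u (Set.Ici 0) → ∀ t : ℝ, 0 ≤ t →
      HasDerivWithinAt (fun T => ∫ τ in (0:ℝ)..T, u τ) (u t) (Set.Ici 0) t := by
    intro u cu t ht
    rcases eq_or_lt_of_le ht with rfl | ht'
    · exact intervalIntegral.integral_hasDerivWithinAt_right (s := Set.Ici 0) (t := Set.Ioi 0)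
        (intOn u cu 0 0 le_rfl le_rfl)
        ((cu.mono Set.Ioi_subset_Ici_self).stronglyMeasurableAtFilter_nhdsWithin
          measurableSet_Ioi 0)
        ((cu 0 Set.self_mem_Ici).mono Set.Ioi_subset_Ici_self)
    · exact (FTCat u cu t ht').hasDerivWithinAt
  -- derivative of V along the trajectory
  have hVderAt : ∀ t : ℝ, 0 ≤ t → HasDerivAt (fun τ => V (x_e τ))
      (⟪gradient V (x_e t), f_e (x_e t) (w t)⟫) t := by
    intro t ht
    have hdV : HasFDerivAt V (fderiv ℝ V (x_e t)) (x_e t) :=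
      (hV.differentiable one_ne_zero).differentiableAt.hasFDerivAt
    have h := hdV.comp_hasDerivAt t (hode t ht)
    have hgr : gradient V (x_e t)
        = (InnerProductSpace.toDual ℝ _).symm (fderiv ℝ V (x_e t)) := rfl
    rw [hgr, InnerProductSpace.toDual_symm_apply]
    exact h
  -- the Lyapunov-type family
  set Gf : ℝ → ℝ → ℝ := fun k t =>
    V (x_e t) + s * (∫ τ in (0:ℝ)..t, z τ) + k * (∫ τ in (0:ℝ)..t, nx τ) with hGfdef
  have hGd : ∀ (k t : ℝ), 0 ≤ t → HasDerivWithinAt (Gf k)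
      (⟪gradient V (x_e t), f_e (x_e t) (w t)⟫ + s * z t + k * nx t) (Set.Ici 0) t :=
    fun k t ht => (((hVderAt t ht).hasDerivWithinAt.add
      ((FTCw z cz t ht).const_mul s)).add ((FTCw nx cnx t ht).const_mul k))
  have hGdAt : ∀ (k t : ℝ), 0 < t → HasDerivAt (Gf k)
      (⟪gradient V (x_e t), f_e (x_e t) (w t)⟫ + s * z t + k * nx t) t :=
    fun k t ht => (((hVderAt t ht.le).add
      ((FTCat z cz t ht).const_mul s)).add ((FTCat nx cnx t ht).const_mul k))
  have hnx_nonneg : ∀ t : ℝ, 0 ≤ nx t := fun t => by rw [hnxdef]; positivity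
  have hDbound : ∀ (k t : ℝ), k ≤ ε → 0 ≤ t → V (x_e t) ≤ c →
      ⟪gradient V (x_e t), f_e (x_e t) (w t)⟫ + s * z t + k * nx t ≤ (k - ε) * nx t := by
    intro k t hkε ht hVc
    have hd := hdiss (w t) (x_e t) hVc
    have h1 : z t = h_e (x_e t) (w t) := rfl
    have h2 : nx t = ‖x_e t‖ ^ 2 := rfl
    rw [h1, h2]
    nlinarith [hnx_nonneg t]
  have hanti : ∀ k : ℝ, k ≤ ε → ∀ T : ℝ, 0 ≤ T → (∀ τ ∈ Set.Icc (0:ℝ) T, V (x_e τ) ≤ c) →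
      AntitoneOn (Gf k) (Set.Icc 0 T) := by
    intro k hkε T hT hVc
    apply antitoneOn_of_deriv_nonpos (convex_Icc 0 T)
    · exact fun τ hτ => ((hGd k τ hτ.1).continuousWithinAt).mono Set.Icc_subset_Ici_self
    · intro τ hτ; rw [interior_Icc] at hτ
      exact (hGdAt k τ hτ.1).differentiableAt.differentiableWithinAt
    · intro τ hτ; rw [interior_Icc] at hτ
      rw [(hGdAt k τ hτ.1).deriv]
      have hb := hDbound k τ hkε hτ.1.le (hVc τ ⟨hτ.1.le, hτ.2.le⟩)
      nlinarith [hnx_nonneg τ]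
  have hVnonneg : ∀ y, 0 ≤ V y := by
    intro y
    rcases eq_or_ne y 0 with rfl | hy
    · exact le_of_eq hV0.symm
    · exact (hVpos y hy).le
  have hZnonneg : ∀ T : ℝ, 0 ≤ T → 0 ≤ ∫ τ in (0:ℝ)..T, z τ := fun T hT => hipc T hT
  have hXnonneg : ∀ T : ℝ, 0 ≤ T → 0 ≤ ∫ τ in (0:ℝ)..T, nx τ :=
    fun T hT => intervalIntegral.integral_nonneg hT fun u _ => hnx_nonneg u
  have hG0 : ∀ k : ℝ, Gf k 0 = V (x_e 0) := by
    intro k; simp only [hGfdef]; simp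
  have hVleG : ∀ k : ℝ, 0 ≤ k → ∀ T : ℝ, 0 ≤ T → V (x_e T) ≤ Gf k T := by
    intro k hk T hT
    simp only [hGfdef]
    nlinarith [mul_nonneg hs (hZnonneg T hT), mul_nonneg hk (hXnonneg T hT)]
  -- invariance of the sublevel set
  have key : ∀ T : ℝ, 0 ≤ T → Gf (ε/2) T ≤ c := by
    by_contra hcon
    push_neg at hcon
    obtain ⟨T₁, hT₁0, hT₁⟩ := hcon
    set B : Set ℝ := {T | 0 ≤ T ∧ ∀ τ ∈ Set.Icc (0:ℝ) T, Gf (ε/2) τ ≤ c} with hBdef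
    have h0B : (0:ℝ) ∈ B := by
      refine ⟨le_rfl, fun τ hτ => ?_⟩
      have hτ0 : τ = 0 := le_antisymm hτ.2 hτ.1
      rw [hτ0, hG0]; exact h0
    have hBbdd : BddAbove B := by
      refine ⟨T₁, fun T hT => ?_⟩
      by_contra hTT
      push_neg at hTT
      exact absurd (hT.2 T₁ ⟨hT₁0, hTT.le⟩) (not_le.mpr hT₁)
    set T' : ℝ := sSup B with hT'def
    have hT'0 : 0 ≤ T' := le_csSup hBbdd h0B
    have hT'mem : ∀ τ ∈ Set.Icc (0:ℝ) T', Gf (ε/2) τ ≤ c := by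
      intro τ hτ
      rcases lt_or_eq_of_le hτ.2 with hlt | heq
      · obtain ⟨T, hTB, hτT⟩ := exists_lt_of_lt_csSup ⟨0, h0B⟩ hlt
        exact hTB.2 τ ⟨hτ.1, hτT.le⟩
      · rw [heq]
        rcases eq_or_lt_of_le hT'0 with h0eq | hpos
        · rw [← h0eq, hG0]; exact h0
        · have hcont : ContinuousWithinAt (Gf (ε/2)) (Set.Ici 0) T' :=
            (hGd _ T' hT'0).continuousWithinAt
          have hne : (𝓝[Set.Ioo 0 T'] T').NeBot := right_nhdsWithin_Ioo_neBot hpos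
          have htend : Tendsto (Gf (ε/2)) (𝓝[Set.Ioo 0 T'] T') (𝓝 (Gf (ε/2) T')) :=
            hcont.tendsto.mono_left (nhdsWithin_mono _ fun u hu => hu.1.le)
          refine le_of_tendsto htend ?_
          filter_upwards [self_mem_nhdsWithin] with u hu
          obtain ⟨T, hTB, huT⟩ := exists_lt_of_lt_csSup ⟨0, h0B⟩ hu.2
          exact hTB.2 u ⟨hu.1.le, huT.le⟩
    rcases lt_or_eq_of_le (hT'mem T' ⟨hT'0, le_rfl⟩) with hlt | heqc
    · -- Gf (ε/2) T' < c : extend by continuity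
      have hcont : ContinuousWithinAt (Gf (ε/2)) (Set.Ici 0) T' :=
        (hGd _ T' hT'0).continuousWithinAt
      have hev : ∀ᶠ u in 𝓝[Set.Ici T'] T', Gf (ε/2) u < c :=
        (hcont.tendsto.eventually_lt_const hlt).filter_mono
          (nhdsWithin_mono _ (Set.Ici_subset_Ici.mpr hT'0))
      rw [eventually_iff, mem_nhdsGE_iff_exists_Icc_subset] at hev
      obtain ⟨b, hbT', hsub⟩ := hev
      have hbB : b ∈ B := by
        refine ⟨hT'0.trans (le_of_lt hbT'), fun τ hτ => ?_⟩
        rcases le_or_gt τ T' with h | h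
        · exact hT'mem τ ⟨hτ.1, h⟩
        · exact (hsub ⟨h.le, hτ.2⟩).le
      exact absurd (le_csSup hBbdd hbB) (not_le.mpr hbT')
    · -- Gf (ε/2) T' = c
      have hVcc : ∀ τ ∈ Set.Icc (0:ℝ) T', V (x_e τ) ≤ c := fun τ hτ =>
        (hVleG (ε/2) (by positivity) τ hτ.1).trans (hT'mem τ hτ)
      by_cases hx0 : x_e T' = 0
      · rcases eq_or_lt_of_le hT'0 with hT'eq | hT'pos
        · -- T' = 0
          rw [← hT'eq, hG0] at heqc
          rw [← hT'eq] at hx0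
          rw [hx0, hV0] at heqc
          linarith
        · -- 0 < T'
          have hanti2 := hanti ε le_rfl T' hT'0 hVcc
          have hGε : Gf ε T' ≤ c :=
            (hanti2 (Set.left_mem_Icc.mpr hT'0) (Set.right_mem_Icc.mpr hT'0) hT'0).trans
              (by rw [hG0]; exact h0)
          have hXT0 : (∫ τ in (0:ℝ)..T', nx τ) = 0 := by
            have h1 : Gf ε T' - Gf (ε/2) T' = (ε/2) * ∫ τ in (0:ℝ)..T', nx τ := by
              simp only [hGfdef]; ring
            have h2 := hXnonneg T' hT'0
            have h9 : (ε/2) * (∫ τ in (0:ℝ)..T', nx τ) ≤ 0 := by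
              rw [← h1]; exact sub_nonpos.mpr (hGε.trans heqc.ge)
            rcases lt_or_eq_of_le h2 with hpos2 | he
            · exfalso; nlinarith [mul_pos (half_pos hε) hpos2]
            · exact he.symm
          have hXcc : ∀ σ ∈ Set.Icc (0:ℝ) T', (∫ ρ in (0:ℝ)..σ, nx ρ) = 0 := by
            intro σ hσ
            refine le_antisymm ?_ (hXnonneg σ hσ.1)
            have h3 : (∫ τ in (0:ℝ)..T', nx τ)
                = (∫ ρ in (0:ℝ)..σ, nx ρ) + ∫ ρ in σ..T', nx ρ :=
              (intervalIntegral.integral_add_adjacent_intervals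
                (intOn nx cnx 0 σ le_rfl hσ.1) (intOn nx cnx σ T' hσ.1 hT'0)).symm
            have h4 : 0 ≤ ∫ ρ in σ..T', nx ρ :=
              intervalIntegral.integral_nonneg hσ.2 fun u _ => hnx_nonneg u
            linarith [hXT0]
          have hxzero : ∀ τ ∈ Set.Icc (0:ℝ) T', x_e τ = 0 := by
            intro τ hτ
            have hd1 : HasDerivWithinAt (fun T => ∫ ρ in (0:ℝ)..T, nx ρ) (nx τ)
                (Set.Icc 0 T') τ := (FTCw nx cnx τ hτ.1).mono Set.Icc_subset_Ici_self
            have hd2 : HasDerivWithinAt (fun T => ∫ ρ in (0:ℝ)..T, nx ρ) 0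
                (Set.Icc 0 T') τ :=
              (hasDerivWithinAt_const τ (Set.Icc 0 T') (0:ℝ)).congr
                (fun σ hσ => hXcc σ hσ) (hXcc τ hτ)
            have hud : UniqueDiffWithinAt ℝ (Set.Icc (0:ℝ) T') τ := (uniqueDiffOn_Icc hT'pos) τ hτ
            have hnxτ : nx τ = 0 := by
              rw [← hd1.derivWithin hud, hd2.derivWithin hud]
            have hnorm : ‖x_e τ‖ ^ 2 = 0 := hnxτ
            have : ‖x_e τ‖ = 0 := by nlinarith [norm_nonneg (x_e τ)]
            exact norm_eq_zero.mp this
          have hgrad0 : fderiv ℝ V 0 = 0 := by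
            have hmin : IsLocalMin V 0 :=
              Filter.Eventually.of_forall fun y => by rw [hV0]; exact hVnonneg y
            exact hmin.fderiv_eq_zero
          have hsz : ∀ u, s * h_e 0 u ≤ 0 := by
            intro u
            have hd := hdiss u 0 (by rw [hV0]; exact hc.le)
            have hg : ⟪gradient V 0, f_e 0 u⟫ = 0 := by
              have hgr : gradient V 0
                  = (InnerProductSpace.toDual ℝ _).symm (fderiv ℝ V 0) := rfl
              rw [hgr, InnerProductSpace.toDual_symm_apply, hgrad0]
              rfl
            rw [hg] at hd
            simpa using hd
          have hsZ : s * (∫ τ in (0:ℝ)..T', z τ) ≤ 0 := by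
            rw [← intervalIntegral.integral_const_mul]
            have h5 : ∀ τ ∈ Set.Icc (0:ℝ) T', s * z τ ≤ 0 := by
              intro τ hτ
              have hzτ : z τ = h_e 0 (w τ) := by rw [hzdef]; simp only []; rw [hxzero τ hτ]
              rw [hzτ]; exact hsz (w τ)
            have h6 : (∫ τ in (0:ℝ)..T', s * z τ) ≤ ∫ τ in (0:ℝ)..T', (0:ℝ) :=
              intervalIntegral.integral_mono_on hT'0
                ((intOn z cz 0 T' le_rfl hT'0).const_mul s) intervalIntegrable_const h5
            simpa using h6
          have h7 : V (x_e T') = 0 := by rw [hx0, hV0]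
          have h8 : Gf (ε/2) T' = V (x_e T') + s * (∫ τ in (0:ℝ)..T', z τ)
              + (ε/2) * ∫ τ in (0:ℝ)..T', nx τ := by simp only [hGfdef]
          rw [h8, h7, hXT0] at heqc
          nlinarith
      · -- x_e T' ≠ 0 : strict decrease to the right
        have hd := hGd (ε/2) T' hT'0
        have hnxpos : 0 < nx T' := pow_pos (norm_pos_iff.mpr hx0) 2
        have hneg : ⟪gradient V (x_e T'), f_e (x_e T') (w T')⟫ + s * z T' + (ε/2) * nx T' < 0 := by
          have hb := hDbound (ε/2) T' (by linarith) hT'0 (hVcc T' ⟨hT'0, le_rfl⟩)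
          nlinarith
        obtain ⟨b, hbT', hblt⟩ :=
          slope_neg_right (hd.mono (Set.Ici_subset_Ici.mpr hT'0)) hneg
        have hbB : b ∈ B := by
          refine ⟨hT'0.trans hbT'.le, fun τ hτ => ?_⟩
          rcases le_or_gt τ T' with h | h
          · exact hT'mem τ ⟨hτ.1, h⟩
          · exact ((hblt τ ⟨h, hτ.2⟩).le).trans (le_of_eq heqc)
        exact absurd (le_csSup hBbdd hbB) (not_le.mpr hbT')
  -- consequences of invariance
  have hVle : ∀ t : ℝ, 0 ≤ t → V (x_e t) ≤ c := fun t ht =>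
    (hVleG (ε/2) (by positivity) t ht).trans (key t ht)
  have hXbound : ∀ T : ℝ, 0 ≤ T → (∫ τ in (0:ℝ)..T, nx τ) ≤ c / ε := by
    intro T hT
    have hanti2 := hanti ε le_rfl T hT fun τ hτ => hVle τ hτ.1
    have h1 : Gf ε T ≤ c :=
      (hanti2 (Set.left_mem_Icc.mpr hT) (Set.right_mem_Icc.mpr hT) hT).trans
        (by rw [hG0]; exact h0)
    have h2 := mul_nonneg hs (hZnonneg T hT)
    have h3 := hVnonneg (x_e T)
    have h4 : Gf ε T = V (x_e T) + s * (∫ τ in (0:ℝ)..T, z τ)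
        + ε * ∫ τ in (0:ℝ)..T, nx τ := by simp only [hGfdef]
    rw [h4] at h1
    rw [le_div_iff₀ hε]
    nlinarith
  -- continuity of the polynomial maps
  have cyj : Continuous fun y : EuclideanSpace ℝ (Fin N) => (fun j => y j : Fin N → ℝ) :=
    continuous_pi fun j => (EuclideanSpace.proj j).continuous
  have cg : Continuous g_e := by
    obtain ⟨Q, hQ⟩ := hg_poly
    rw [← (EuclideanSpace.equiv (Fin p) ℝ).toHomeomorph.comp_continuous_iff]
    refine continuous_pi fun i => ?_
    exact ((MvPolynomial.continuous_eval (Q i)).comp cyj).congr fun y => (hQ y i).symm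
  have cf : Continuous fun q : EuclideanSpace ℝ (Fin N) × EuclideanSpace ℝ (Fin m) =>
      f_e q.1 q.2 := by
    obtain ⟨P, hP⟩ := hf_poly
    rw [← (EuclideanSpace.equiv (Fin N) ℝ).toHomeomorph.comp_continuous_iff]
    refine continuous_pi fun i => ?_
    have hcsum : Continuous fun q : EuclideanSpace ℝ (Fin N) × EuclideanSpace ℝ (Fin m) =>
        (Sum.elim (fun j => q.1 j) (fun j => q.2 j) : Fin N ⊕ Fin m → ℝ) := by
      refine continuous_pi ?_
      rintro (j | j)
      · exact (EuclideanSpace.proj j).continuous.comp continuous_fst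
      · exact (EuclideanSpace.proj j).continuous.comp continuous_snd
    exact ((MvPolynomial.continuous_eval (P i)).comp hcsum).congr fun q => (hP q.1 q.2 i).symm
  -- bound on w
  obtain ⟨B₁, hB₁⟩ := hcompact.exists_bound_of_continuousOn cg.continuousOn
  have hbddrange : BddAbove (Set.range fun t : Set.Ici (0:ℝ) => ‖g_e (x_e t)‖) := by
    refine ⟨B₁, ?_⟩
    rintro v ⟨t, rfl⟩
    exact hB₁ _ (hVle t t.2)
  have hwb : ∀ t : ℝ, 0 ≤ t → ‖w t‖ ≤ γ * ⨆ τ : Set.Ici (0:ℝ), ‖g_e (x_e τ)‖ :=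
    hgain hbddrange
  set S : ℝ := γ * ⨆ τ : Set.Ici (0:ℝ), ‖g_e (x_e τ)‖ with hSdef
  -- bound on the derivative
  obtain ⟨M₀, hM₀⟩ := (hcompact.prod
    (isCompact_closedBall (0 : EuclideanSpace ℝ (Fin m)) S)).exists_bound_of_continuousOn
    cf.continuousOn
  set M : ℝ := max M₀ 1 with hMdef
  have hM1 : (0:ℝ) < M := lt_of_lt_of_le one_pos (le_max_right _ _)
  have hder_bd : ∀ t : ℝ, 0 ≤ t → ‖f_e (x_e t) (w t)‖ ≤ M := by
    intro t ht
    refine le_trans (hM₀ (x_e t, w t) ?_) (le_max_left _ _)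
    exact Set.mem_prod.mpr ⟨hVle t ht, mem_closedBall_zero_iff.mpr (hwb t ht)⟩
  have hlip : ∀ a b : ℝ, 0 ≤ a → a ≤ b → ‖x_e b - x_e a‖ ≤ M * (b - a) := by
    intro a b ha hab
    have h1 := Convex.norm_image_sub_le_of_norm_hasDerivWithin_le
      (f' := fun t => f_e (x_e t) (w t)) (s := Set.Ici (0:ℝ))
      (fun t ht => (hode t ht).hasDerivWithinAt) (fun t ht => hder_bd t ht)
      (convex_Ici 0) ha (ha.trans hab)
    calc ‖x_e b - x_e a‖ ≤ M * ‖b - a‖ := h1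
    _ = M * (b - a) := by rw [Real.norm_eq_abs, abs_of_nonneg (by linarith)]
  -- Barbalat-type conclusion
  rw [Metric.tendsto_atTop]
  by_contra hcon
  push_neg at hcon
  obtain ⟨r, hr, hvisit⟩ := hcon
  set δ : ℝ := r / (2 * M) with hδdef
  have hδpos : 0 < δ := div_pos hr (by linarith)
  set η : ℝ := (r/2)^2 * δ with hηdef
  have hηpos : 0 < η := by positivity
  have hMδ : M * δ = r / 2 := by
    rw [hδdef]; field_simp
  have hstep : ∀ t : ℝ, 0 ≤ t → r ≤ ‖x_e t‖ →
      (∫ τ in (0:ℝ)..t, nx τ) + η ≤ ∫ τ in (0:ℝ)..(t + δ), nx τ := by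
    intro t ht hrt
    have hlow : ∀ σ ∈ Set.Icc t (t + δ), (r/2)^2 ≤ nx σ := by
      intro σ hσ
      have h1 : ‖x_e σ - x_e t‖ ≤ M * (σ - t) := hlip t σ ht hσ.1
      have h2 : M * (σ - t) ≤ M * δ :=
        mul_le_mul_of_nonneg_left (by linarith [hσ.2]) hM1.le
      have h4 : ‖x_e t‖ - ‖x_e σ‖ ≤ ‖x_e σ - x_e t‖ := by
        rw [norm_sub_rev]; exact norm_sub_norm_le _ _
      have h3 : r / 2 ≤ ‖x_e σ‖ := by linarith
      exact pow_le_pow_left₀ (by positivity) h3 2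
    have hint : (∫ τ in t..(t+δ), ((r/2)^2 : ℝ)) ≤ ∫ τ in t..(t+δ), nx τ :=
      intervalIntegral.integral_mono_on (by linarith) intervalIntegrable_const
        (intOn nx cnx t (t+δ) ht (by linarith)) hlow
    have hconst : (∫ τ in t..(t+δ), ((r/2)^2 : ℝ)) = η := by
      rw [intervalIntegral.integral_const, smul_eq_mul, hηdef]; ring
    have hadd : (∫ τ in (0:ℝ)..(t+δ), nx τ)
        = (∫ τ in (0:ℝ)..t, nx τ) + ∫ τ in t..(t+δ), nx τ :=
      (intervalIntegral.integral_add_adjacent_intervals (intOn nx cnx 0 t le_rfl ht)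
        (intOn nx cnx t (t+δ) ht (by linarith))).symm
    linarith
  have hiter : ∀ n : ℕ, ∃ T : ℝ, 0 ≤ T ∧ (n : ℝ) * η ≤ ∫ τ in (0:ℝ)..T, nx τ := by
    intro n
    induction n with
    | zero => exact ⟨0, le_rfl, by simp⟩
    | succ n ih =>
      obtain ⟨T, hT0, hTn⟩ := ih
      obtain ⟨t, htT, hrt⟩ := hvisit T
      have ht0 : 0 ≤ t := hT0.trans htT
      have hrt' : r ≤ ‖x_e t‖ := by rwa [dist_zero_right] at hrt
      refine ⟨t + δ, by linarith, ?_⟩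
      have hmono : (∫ τ in (0:ℝ)..T, nx τ) ≤ ∫ τ in (0:ℝ)..t, nx τ := by
        have h3 : (∫ τ in (0:ℝ)..t, nx τ) = (∫ τ in (0:ℝ)..T, nx τ) + ∫ τ in T..t, nx τ :=
          (intervalIntegral.integral_add_adjacent_intervals (intOn nx cnx 0 T le_rfl hT0)
            (intOn nx cnx T t hT0 ht0)).symm
        have h4 : 0 ≤ ∫ τ in T..t, nx τ :=
          intervalIntegral.integral_nonneg htT fun u _ => hnx_nonneg u
        linarith
      have h5 := hstep t ht0 hrt'
      push_cast
      linarith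
  obtain ⟨n, hn⟩ := exists_nat_gt ((c/ε) / η)
  obtain ⟨T, hT0, hTn⟩ := hiter n
  have h5 : (n:ℝ) * η ≤ c / ε := hTn.trans (hXbound T hT0)
  have h6 : c / ε < (n:ℝ) * η := (div_lt_iff₀ hηpos).mp hn
  linarith
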